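/- Let k, t₀, t₁, t₂ be natural numbers, let n = 2^k, and define θ : 𝔽₂ⁿ → 𝔽₂ⁿ by (θ x)ᵢ = x_{(i+t₀) mod n} + x_{(i+t₁) mod n} + x_{(i+t₂) mod n} (sum in ZMod 2, indices taken modulo n). Then θ is bijective. -/

import Mathlib

open Fin.NatCast

private def sh {n : ℕ} [NeZero n] (a b c : Fin n) (x : Fin n → ZMod 2) (i : Fin n) : ZMod 2 :=
  x (i + a) + x (i + b) + x (i + c)

open Fin.CommRing in
private lemma sh_sq {n : ℕ} [NeZero n] (a b c : Fin n) :
    sh a b c ∘ sh a b c = sh (a + a) (b + b) (c + c) := by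
  funext x i
  simp only [Function.comp, sh]
  have h1 : i + a + b = i + b + a := by ring
  have h2 : i + a + c = i + c + a := by ring
  have h3 : i + b + c = i + c + b := by ring
  have h4 : i + (a + a) = i + a + a := by ring
  have h5 : i + (b + b) = i + b + b := by ring
  have h6 : i + (c + c) = i + c + c := by ring
  rw [h1, h2, h3, h4, h5, h6]
  generalize x (i + a + a) = A
  generalize x (i + b + a) = B
  generalize x (i + c + a) = C
  generalize x (i + b + b) = D
  generalize x (i + c + b) = E
  generalize x (i + c + c) = F
  revert A B C D E F; decide

private lemma sh_iter {n : ℕ} [NeZero n] (a b c : Fin n) (m : ℕ) :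
    (sh a b c)^[2 ^ m] = sh ((2 ^ m : ℕ) • a) ((2 ^ m : ℕ) • b) ((2 ^ m : ℕ) • c) := by
  induction m with
  | zero => simp [pow_zero, one_nsmul]
  | succ m ih =>
      have h2 : 2 ^ (m + 1) = 2 ^ m + 2 ^ m := by ring
      rw [h2, Function.iterate_add, ih, sh_sq]
      congr 1 <;> rw [← two_nsmul, ← mul_nsmul'] <;> ring_nf

open Fin.CommRing in
private lemma sh_self_iter {n : ℕ} [NeZero n] (k : ℕ) (hn : n = 2 ^ k) (a b c : Fin n) :
    (sh a b c)^[2 ^ k] = id := by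
  have key : ∀ d : Fin n, (2 ^ k : ℕ) • d = 0 := by
    intro d
    rw [nsmul_eq_mul, ← hn]
    simp [Fin.natCast_self]
  rw [sh_iter, key a, key b, key c]
  funext x i
  simp only [sh, add_zero, id]
  generalize x i = A
  revert A; decide

theorem theta_bijective (k t₀ t₁ t₂ : ℕ) :
    Function.Bijective (fun (x : Fin (2 ^ k) → ZMod 2) (i : Fin (2 ^ k)) =>
      x (i + (t₀ : Fin (2 ^ k))) + x (i + (t₁ : Fin (2 ^ k))) + x (i + (t₂ : Fin (2 ^ k)))) := by
  haveI : NeZero (2 ^ k) := ⟨by positivity⟩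
  have hθ : (fun (x : Fin (2 ^ k) → ZMod 2) (i : Fin (2 ^ k)) =>
      x (i + (t₀ : Fin (2 ^ k))) + x (i + (t₁ : Fin (2 ^ k))) + x (i + (t₂ : Fin (2 ^ k))))
      = sh (t₀ : Fin (2 ^ k)) (t₁ : Fin (2 ^ k)) (t₂ : Fin (2 ^ k)) := rfl
  rw [hθ]
  set f := sh (t₀ : Fin (2 ^ k)) (t₁ : Fin (2 ^ k)) (t₂ : Fin (2 ^ k)) with hf
  have hid : f^[2 ^ k] = id := sh_self_iter k rfl _ _ _
  have hpos : 1 ≤ 2 ^ k := Nat.one_le_two_pow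
  have hcomp1 : f ∘ f^[2 ^ k - 1] = id := by
    rw [← Function.iterate_succ' f, Nat.succ_eq_add_one, Nat.sub_add_cancel hpos, hid]
  have hcomp2 : f^[2 ^ k - 1] ∘ f = id := by
    rw [← Function.iterate_succ f, Nat.succ_eq_add_one, Nat.sub_add_cancel hpos, hid]
  exact Function.bijective_iff_has_inverse.mpr
    ⟨f^[2 ^ k - 1], congrFun hcomp2, congrFun hcomp1⟩
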